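/- Let p > 1, let Π be a (p+1)-vector at a point satisfying the decomposability (Nambu-Poisson) condition, and F a (p+1)-form at that point, both viewed as matrices Π: Λᵖ V* → V and F: Λᵖ V → V*. Then (1 - ΠFᵀ)(1 - (1/(p+1))⟨Π,F⟩)⁻¹ Π = Π, where ⟨Π,F⟩ = Πⁱᴶ F_{iJ} = Tr(ΠFᵀ), assuming 1 - (1/(p+1))⟨Π,F⟩ ≠ 0. -/

import Mathlib

open BigOperators

/-- The coefficient array of an alternating `k`-tensor on `ℝⁿ`. -/
def IsAltTensor (n k : ℕ) (T : (Fin k → Fin n) → ℝ) : Prop :=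
  ∀ (v : Fin k → Fin n) (σ : Equiv.Perm (Fin k)),
    T (v ∘ σ) = ((Equiv.Perm.sign σ : ℤ) : ℝ) * T v

/-- A `k`-vector is decomposable iff it is of the form `e₁ ∧ ⋯ ∧ e_k` (possibly zero); in
components `T^{i₁…i_k} = det((e_a)^{i_b})`.  For `k = p+1 > 2` this is the pointwise
(Nambu-Poisson) decomposability condition. -/
def IsDecomposable (n k : ℕ) (T : (Fin k → Fin n) → ℝ) : Prop :=
  ∃ e : Fin k → (Fin n → ℝ),
    ∀ v : Fin k → Fin n, T v = Matrix.det (Matrix.of fun a b => e a (v b))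

/-- The matrix of `Π Fᵀ : V → V`: `(ΠFᵀ)ⁱⱼ = ∑_{J strictly ordered} Πⁱᴶ F_{jJ}
= (1/p!) ∑_{J any p-tuple} Π^{iJ} F_{jJ}`. -/
noncomputable def contrMatrix (n p : ℕ) (Pi F : (Fin (p + 1) → Fin n) → ℝ) :
    Matrix (Fin n) (Fin n) ℝ :=
  Matrix.of fun i j =>
    (p.factorial : ℝ)⁻¹ * ∑ J : Fin p → Fin n, Pi (Fin.cons i J) * F (Fin.cons j J)


private lemma detUpdateColumnSum {m : ℕ} {ι : Type*} (s : Finset ι)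
    (A : Matrix (Fin m) (Fin m) ℝ) (j : Fin m) (g : ι → Fin m → ℝ) :
    (A.updateCol j (fun r => ∑ a ∈ s, g a r)).det
      = ∑ a ∈ s, (A.updateCol j (g a)).det := by
  classical
  induction s using Finset.induction_on with
  | empty =>
      simp only [Finset.sum_empty]
      exact Matrix.det_eq_zero_of_column_eq_zero j (by simp [Matrix.updateCol_apply])
  | @insert a s ha ih =>
      have h : (fun r => ∑ b ∈ insert a s, g b r)
          = g a + fun r => ∑ b ∈ s, g b r := by
        funext r; simp [Finset.sum_insert ha]
      rw [h, Matrix.det_updateCol_add, ih, Finset.sum_insert ha]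

private lemma master' {n p : ℕ} (Pi : (Fin (p + 1) → Fin n) → ℝ)
    (hPi : ∃ e : Fin (p+1) → (Fin n → ℝ),
      ∀ v : Fin (p+1) → Fin n, Pi v = Matrix.det (Matrix.of fun a b => e a (v b)))
    (i k : Fin n) (J K : Fin p → Fin n) :
    Pi (Fin.cons i K) * Pi (Fin.cons k J)
      = ∑ j : Fin (p+1), Pi (Function.update (Fin.cons i K) j k) *
          Pi (Fin.cons ((Fin.cons i K : Fin (p+1) → Fin n) j) J) := by
  classical
  obtain ⟨e, he⟩ := hPi
  set A : Matrix (Fin (p+1)) (Fin (p+1)) ℝ :=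
    Matrix.of fun a b => e a ((Fin.cons i K : Fin (p+1) → Fin n) b) with hA
  set C : Matrix (Fin (p+1)) (Fin (p+1)) ℝ :=
    Matrix.of fun a b => e a ((Fin.cons k J : Fin (p+1) → Fin n) b) with hC
  set x : Fin (p+1) → ℝ := fun a => e a k with hx
  have hCx : C.updateCol 0 x = C := by
    have : x = fun a => C a 0 := by funext a; simp [hC, hx]
    rw [this]; exact Matrix.updateCol_eq_self C 0
  have hcr : C.updateCol 0 (A.det • x)
      = C.updateCol 0 (A.mulVec (Matrix.cramer A x)) := by
    rw [Matrix.mulVec_cramer]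
  have h1 : Pi (Fin.cons i K) * Pi (Fin.cons k J)
      = (C.updateCol 0 (A.det • x)).det := by
    rw [Matrix.det_updateCol_smul, hCx, he, he]
  rw [h1, hcr]
  have hmv : (A.mulVec (Matrix.cramer A x))
      = fun r => ∑ j, Matrix.cramer A x j * A r j := by
    funext r
    simp [Matrix.mulVec, dotProduct, mul_comm]
  rw [hmv, detUpdateColumnSum Finset.univ C 0 (fun j => fun r => Matrix.cramer A x j * A r j)]
  refine Finset.sum_congr rfl fun j _ => ?_
  have hsm : (fun r => Matrix.cramer A x j * A r j)
      = Matrix.cramer A x j • (fun r => A r j) := by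
    funext r; simp
  rw [hsm, Matrix.det_updateCol_smul]
  congr 1
  · rw [Matrix.cramer_apply, he]
    congr 1
    ext a b
    by_cases hb : b = j
    · subst hb; simp [Matrix.updateCol_apply, hx]
    · simp [Matrix.updateCol_apply, hb, hA, Function.update_of_ne hb]
  · rw [he]
    congr 1
    ext a b
    rcases Fin.eq_zero_or_eq_succ b with hb | ⟨c, hb⟩
    · subst hb; simp [Matrix.updateCol_apply, hA]
    · subst hb; simp [Matrix.updateCol_apply, hC, Fin.succ_ne_zero]

private lemma sign_swap_cons {n p : ℕ} (F : (Fin (p + 1) → Fin n) → ℝ)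
    (hF : IsAltTensor n (p + 1) F) (c : Fin p) (k : Fin n) (K : Fin p → Fin n) :
    F (Fin.cons (K c) (Function.update K c k)) = -F (Fin.cons k K) := by
  have h := hF (Fin.cons k K) (Equiv.swap 0 c.succ)
  have hne : (0 : Fin (p+1)) ≠ c.succ := (Fin.succ_ne_zero c).symm
  have hcomp : (Fin.cons k K : Fin (p+1) → Fin n) ∘ (Equiv.swap 0 c.succ)
      = Fin.cons (K c) (Function.update K c k) := by
    funext b
    refine Fin.cases ?_ (fun d => ?_) b
    · simp [Equiv.swap_apply_left]
    · by_cases hd : d = c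
      · subst hd
        simp [Equiv.swap_apply_right]
      · have h1 : d.succ ≠ (0 : Fin (p+1)) := Fin.succ_ne_zero d
        have h2 : d.succ ≠ c.succ := by simpa [Fin.succ_inj] using hd
        simp [Equiv.swap_apply_of_ne_of_ne h1 h2, Function.update_of_ne hd]
  rw [hcomp, Equiv.Perm.sign_swap hne] at h
  simpa using h

lemma key {n p : ℕ} (Pi F : (Fin (p + 1) → Fin n) → ℝ)
    (hPi : ∃ e : Fin (p+1) → (Fin n → ℝ),
      ∀ v : Fin (p+1) → Fin n, Pi v = Matrix.det (Matrix.of fun a b => e a (v b)))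
    (hF : IsAltTensor n (p + 1) F) (i : Fin n) (J : Fin p → Fin n) :
    ((p : ℝ) + 1) * ∑ q : Fin n × (Fin p → Fin n),
        F (Fin.cons q.1 q.2) * (Pi (Fin.cons i q.2) * Pi (Fin.cons q.1 J))
      = (∑ q : Fin n × (Fin p → Fin n), F (Fin.cons q.1 q.2) * Pi (Fin.cons q.1 q.2))
          * Pi (Fin.cons i J) := by
  classical
  set S : ℝ := ∑ q : Fin n × (Fin p → Fin n),
      F (Fin.cons q.1 q.2) * (Pi (Fin.cons i q.2) * Pi (Fin.cons q.1 J)) with hS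
  set T : ℝ := ∑ q : Fin n × (Fin p → Fin n),
      F (Fin.cons q.1 q.2) * Pi (Fin.cons q.1 q.2) with hT
  have hstep : S = T * Pi (Fin.cons i J) + ∑ c : Fin p, ∑ q : Fin n × (Fin p → Fin n),
      F (Fin.cons q.1 q.2) *
        (Pi (Fin.cons i (Function.update q.2 c q.1)) * Pi (Fin.cons (q.2 c) J)) := by
    have h1 : S = ∑ q : Fin n × (Fin p → Fin n), F (Fin.cons q.1 q.2) *
        ∑ j : Fin (p+1), Pi (Function.update (Fin.cons i q.2) j q.1) *
          Pi (Fin.cons ((Fin.cons i q.2 : Fin (p+1) → Fin n) j) J) := by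
      refine Finset.sum_congr rfl fun q _ => ?_
      rw [← master' Pi hPi i q.1 J q.2]
    rw [h1]
    have h2 : ∀ q : Fin n × (Fin p → Fin n),
        F (Fin.cons q.1 q.2) *
          ∑ j : Fin (p+1), Pi (Function.update (Fin.cons i q.2) j q.1) *
            Pi (Fin.cons ((Fin.cons i q.2 : Fin (p+1) → Fin n) j) J)
        = F (Fin.cons q.1 q.2) * Pi (Fin.cons q.1 q.2) * Pi (Fin.cons i J)
          + ∑ c : Fin p, F (Fin.cons q.1 q.2) *
              (Pi (Fin.cons i (Function.update q.2 c q.1)) * Pi (Fin.cons (q.2 c) J)) := by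
      intro q
      rw [Fin.sum_univ_succ]
      rw [Fin.update_cons_zero, Fin.cons_zero, mul_add, Finset.mul_sum]
      refine congrArg₂ (· + ·) (mul_assoc _ _ _).symm (Finset.sum_congr rfl fun c _ => ?_)
      rw [← Fin.cons_update, Fin.cons_succ]
    rw [Finset.sum_congr rfl fun q _ => h2 q, Finset.sum_add_distrib, ← Finset.sum_mul,
      Finset.sum_comm]
  have hW : ∀ c : Fin p, ∑ q : Fin n × (Fin p → Fin n),
      F (Fin.cons q.1 q.2) *
        (Pi (Fin.cons i (Function.update q.2 c q.1)) * Pi (Fin.cons (q.2 c) J)) = -S := by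
    intro c
    set φ : Fin n × (Fin p → Fin n) → Fin n × (Fin p → Fin n) :=
      fun q => (q.2 c, Function.update q.2 c q.1) with hφ
    have hinv : Function.Involutive φ := by
      rintro ⟨k, K⟩
      simp [hφ, Function.update_idem, Function.update_self, Function.update_eq_self]
    have hbij := hinv.bijective
    rw [← Function.Bijective.sum_comp hbij
      (fun q => F (Fin.cons q.1 q.2) *
        (Pi (Fin.cons i (Function.update q.2 c q.1)) * Pi (Fin.cons (q.2 c) J)))]
    have : ∀ q : Fin n × (Fin p → Fin n),
        F (Fin.cons (φ q).1 (φ q).2) *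
          (Pi (Fin.cons i (Function.update (φ q).2 c (φ q).1)) *
            Pi (Fin.cons ((φ q).2 c) J))
        = -(F (Fin.cons q.1 q.2) * (Pi (Fin.cons i q.2) * Pi (Fin.cons q.1 J))) := by
      rintro ⟨k, K⟩
      have e1 : Function.update (Function.update K c k) c (K c) = K := by
        rw [Function.update_idem, Function.update_eq_self]
      have e2 : Function.update K c k c = k := Function.update_self c k K
      simp only [hφ, e1, e2, sign_swap_cons F hF c k K]
      ring
    rw [Finset.sum_congr rfl fun q _ => this q, Finset.sum_neg_distrib]
  rw [Finset.sum_congr rfl fun c _ => hW c, Finset.sum_const, Finset.card_univ,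
    Fintype.card_fin, nsmul_eq_mul] at hstep
  have : S + (p : ℝ) * S = T * Pi (Fin.cons i J) := by linarith [hstep]
  linarith [this]

/-- For `p > 1`, a decomposable (Nambu-Poisson) `(p+1)`-vector `Π` and a `(p+1)`-form `F`,
one has `(1 - ΠFᵀ)(1 - ⟨Π,F⟩/(p+1))⁻¹ Π = Π`, where `⟨Π,F⟩ = Tr(ΠFᵀ)`,
provided `1 - ⟨Π,F⟩/(p+1) ≠ 0`. -/
theorem decomposable_gauge_identity {n p : ℕ} (hp : 1 < p)
    (Pi F : (Fin (p + 1) → Fin n) → ℝ)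
    (hPi : IsDecomposable n (p + 1) Pi) (hF : IsAltTensor n (p + 1) F)
    (hs : 1 - (1 / (p + 1 : ℝ)) * (contrMatrix n p Pi F).trace ≠ 0) :
    ∀ (i : Fin n) (J : Fin p → Fin n),
      (1 - (1 / (p + 1 : ℝ)) * (contrMatrix n p Pi F).trace)⁻¹ *
        ∑ k : Fin n, ((1 : Matrix (Fin n) (Fin n) ℝ) - contrMatrix n p Pi F) i k *
          Pi (Fin.cons k J)
      = Pi (Fin.cons i J) := by
  classical
  intro i J
  set M := contrMatrix n p Pi F with hM
  set S : ℝ := ∑ q : Fin n × (Fin p → Fin n),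
      F (Fin.cons q.1 q.2) * (Pi (Fin.cons i q.2) * Pi (Fin.cons q.1 J)) with hS
  set T : ℝ := ∑ q : Fin n × (Fin p → Fin n),
      F (Fin.cons q.1 q.2) * Pi (Fin.cons q.1 q.2) with hT
  have hfac : (p.factorial : ℝ) ≠ 0 := Nat.cast_ne_zero.mpr p.factorial_ne_zero
  have hp1 : ((p : ℝ) + 1) ≠ 0 := by positivity
  have hkey := key Pi F hPi hF i J
  have htr : Matrix.trace M = (p.factorial : ℝ)⁻¹ * T := by
    rw [Matrix.trace, hT, Fintype.sum_prod_type, Finset.mul_sum]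
    refine Finset.sum_congr rfl fun k _ => ?_
    rw [hM]
    simp only [Matrix.diag_apply, contrMatrix, Matrix.of_apply, Finset.mul_sum]
    exact Finset.sum_congr rfl fun K _ => by ring
  have hrow : ∑ k : Fin n, M i k * Pi (Fin.cons k J) = (p.factorial : ℝ)⁻¹ * S := by
    rw [hS, Fintype.sum_prod_type, Finset.mul_sum]
    refine Finset.sum_congr rfl fun k _ => ?_
    rw [hM]
    simp only [contrMatrix, Matrix.of_apply, Finset.mul_sum, Finset.sum_mul]
    exact Finset.sum_congr rfl fun K _ => by ring
  have hrow2 : ∑ k : Fin n, M i k * Pi (Fin.cons k J)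
      = (1 / ((p : ℝ) + 1)) * Matrix.trace M * Pi (Fin.cons i J) := by
    rw [hrow, htr]
    have hSval : S = (T * Pi (Fin.cons i J)) / ((p : ℝ) + 1) := by
      rw [eq_div_iff hp1]
      rw [← hS, ← hT] at hkey
      linarith [hkey]
    rw [hSval]
    ring
  have hsplit : ∑ k : Fin n,
      ((1 : Matrix (Fin n) (Fin n) ℝ) - M) i k * Pi (Fin.cons k J)
      = Pi (Fin.cons i J) - ∑ k : Fin n, M i k * Pi (Fin.cons k J) := by
    simp only [Matrix.sub_apply, Matrix.one_apply, sub_mul, ite_mul, one_mul, zero_mul]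
    rw [Finset.sum_sub_distrib]
    congr 1
    simp
  rw [hsplit, hrow2]
  have hfin : Pi (Fin.cons i J) - 1 / ((p : ℝ) + 1) * Matrix.trace M * Pi (Fin.cons i J)
      = (1 - 1 / ((p : ℝ) + 1) * Matrix.trace M) * Pi (Fin.cons i J) := by ring
  rw [hfin]
  exact inv_mul_cancel_left₀ hs _
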